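/- In the basis setting for the new conventional 3-threshold scheme, let β, β' ∈ K be distinct with π(β + β') ≠ 1, and let s ∈ F. Then the map Ψ_s : K × K → K × K defined by Ψ_s(a₀, a₁) = ( a₀ + a₁·β + (π(a₁) + s)·β² , a₀ + a₁·β' + (π(a₁) + s)·β'² ) is a bijection. In particular, for each pair of share values (z, z') ∈ K × K there is exactly one choice of randomness (a₀, a₁) producing those two shares. -/
import Mathlib


/-- In the basis setting, if the two distinct evaluation points `β, β'` satisfy
`π (β + β') ≠ 1`, then the sharing map `(a₀, a₁) ↦ (share at β, share at β')`
is a bijection of `K × K`; each pair of share values arises from exactly one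
choice of randomness. -/
theorem stmt_6 {F K : Type*} [Field F] [Field K] [Algebra F K] [CharP K 2] [Finite K]
    (π : K →ₗ[F] F) (hπ1 : π 1 = 1)
    (β β' : K) (hβ : β ≠ β') (hπβ : π (β + β') ≠ 1) (s : F) :
    Function.Bijective (fun p : K × K =>
      (p.1 + p.2 * β + algebraMap F K (π p.2 + s) * β ^ 2,
       p.1 + p.2 * β' + algebraMap F K (π p.2 + s) * β' ^ 2)) := by
  have hF2 : CharP F 2 := (algebraMap F K).charP (algebraMap F K).injective 2
  rw [← Finite.injective_iff_bijective]
  intro a b h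
  simp only [Prod.mk.injEq] at h
  obtain ⟨h1, h2⟩ := h
  set d1 : K := a.2 - b.2 with hd1
  have hc : algebraMap F K (π a.2 + s) - algebraMap F K (π b.2 + s)
      = algebraMap F K (π d1) := by
    rw [← map_sub]; congr 1; rw [hd1, map_sub]; ring
  -- subtract the two equations
  have key : d1 * (β - β') + algebraMap F K (π d1) * (β ^ 2 - β' ^ 2) = 0 := by
    have := sub_eq_zero.mpr h1
    have h2' := sub_eq_zero.mpr h2
    have : (a.1 + a.2 * β + algebraMap F K (π a.2 + s) * β ^ 2)
        - (a.1 + a.2 * β' + algebraMap F K (π a.2 + s) * β' ^ 2)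
        = (b.1 + b.2 * β + algebraMap F K (π b.2 + s) * β ^ 2)
        - (b.1 + b.2 * β' + algebraMap F K (π b.2 + s) * β' ^ 2) := by
      rw [h1, h2]
    have e := sub_eq_zero.mpr this
    calc d1 * (β - β') + algebraMap F K (π d1) * (β ^ 2 - β' ^ 2)
        = ((a.1 + a.2 * β + algebraMap F K (π a.2 + s) * β ^ 2)
            - (a.1 + a.2 * β' + algebraMap F K (π a.2 + s) * β' ^ 2))
          - ((b.1 + b.2 * β + algebraMap F K (π b.2 + s) * β ^ 2)
            - (b.1 + b.2 * β' + algebraMap F K (π b.2 + s) * β' ^ 2)) := by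
          rw [← hc]; ring
      _ = 0 := e
  have hbb : β - β' ≠ 0 := sub_ne_zero.mpr hβ
  have hsq : β ^ 2 - β' ^ 2 = (β - β') * (β + β') := by
    ring
  have key2 : d1 + algebraMap F K (π d1) * (β + β') = 0 := by
    have : (β - β') * (d1 + algebraMap F K (π d1) * (β + β')) = 0 := by
      rw [← key, hsq]; ring
    rcases mul_eq_zero.mp this with h | h
    · exact absurd h hbb
    · exact h
  -- apply π
  have hπd : π d1 + π d1 * π (β + β') = 0 := by
    have := congrArg π key2
    rwa [map_add, map_zero, show algebraMap F K (π d1) * (β + β') = (π d1) • (β + β') by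
      rw [Algebra.smul_def], map_smul, smul_eq_mul] at this
  have hπd0 : π d1 = 0 := by
    have hfac : π d1 * (1 + π (β + β')) = 0 := by linear_combination hπd
    rcases mul_eq_zero.mp hfac with h | h
    · exact h
    · exfalso
      apply hπβ
      have : π (β + β') = -1 := by linear_combination h
      rw [this, CharTwo.neg_eq]
  have hd1z : d1 = 0 := by
    have := key2
    rw [hπd0, map_zero, zero_mul, add_zero] at this
    exact this
  have hab2 : a.2 = b.2 := sub_eq_zero.mp hd1z
  have hπab : π a.2 = π b.2 := by rw [hab2]
  have hab1 : a.1 = b.1 := by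
    have := h1
    rw [hab2] at this
    exact add_right_cancel (add_right_cancel this)
  exact Prod.ext hab1 hab2
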